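/- Necessity part of the Neyman–Pearson lemma: let φ be a test of size α = ∫ φ·f₀ dν with constant k ≥ 0 such that ν-almost everywhere φ(x) = 1 whenever f₁(x) > k·f₀(x) and φ(x) = 0 whenever f₁(x) < k·f₀(x). If ψ is any test with ∫ ψ·f₀ dν ≤ α and ∫ ψ·f₁ dν ≥ ∫ φ·f₁ dν (i.e. ψ is most powerful at level α), then ψ agrees with the likelihood-ratio form ν-almost everywhere off the boundary set: for ν-almost every x with f₁(x) ≠ k·f₀(x), ψ(x) = φ(x). -/

import Mathlib

open MeasureTheory

/-- Necessity part of the Neyman–Pearson lemma: if `φ` has the likelihood-ratio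
form with constant `k ≥ 0` and size `α = ∫ φ·f₀ dν`, then any test `ψ` with
size at most `α` and power at least that of `φ` agrees with `φ` ν-a.e. off the
boundary set `{x | f₁ x = k * f₀ x}`. -/
theorem neyman_pearson_necessity
    {X : Type*} [MeasurableSpace X] (ν : Measure X) [SigmaFinite ν]
    (f₀ f₁ : X → ℝ) (hf₀m : Measurable f₀) (hf₁m : Measurable f₁)
    (hf₀ : ∀ x, 0 ≤ f₀ x) (hf₁ : ∀ x, 0 ≤ f₁ x)
    (hint₀ : Integrable f₀ ν) (hint₁ : Integrable f₁ ν)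
    (hnorm₀ : ∫ x, f₀ x ∂ν = 1) (hnorm₁ : ∫ x, f₁ x ∂ν = 1)
    (φ : X → ℝ) (hφm : Measurable φ) (hφ₀ : ∀ x, 0 ≤ φ x) (hφ₁ : ∀ x, φ x ≤ 1)
    (k : ℝ) (hk : 0 ≤ k)
    (hform : ∀ᵐ x ∂ν, (f₁ x > k * f₀ x → φ x = 1) ∧ (f₁ x < k * f₀ x → φ x = 0))
    (ψ : X → ℝ) (hψm : Measurable ψ) (hψ₀ : ∀ x, 0 ≤ ψ x) (hψ₁ : ∀ x, ψ x ≤ 1)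
    (hsize : ∫ x, ψ x * f₀ x ∂ν ≤ ∫ x, φ x * f₀ x ∂ν)
    (hpower : ∫ x, φ x * f₁ x ∂ν ≤ ∫ x, ψ x * f₁ x ∂ν) :
    ∀ᵐ x ∂ν, f₁ x ≠ k * f₀ x → ψ x = φ x := by
  -- integrability of bounded test times density
  have hbd : ∀ (τ : X → ℝ), Measurable τ → (∀ x, 0 ≤ τ x) → (∀ x, τ x ≤ 1) →
      ∀ (f : X → ℝ), Integrable f ν → Integrable (fun x => τ x * f x) ν := by
    intro τ hτm hτ0 hτ1 f hf
    exact hf.bdd_mul (c := 1) hτm.aestronglyMeasurable (Filter.Eventually.of_forall fun x => by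
      rw [Real.norm_eq_abs, abs_of_nonneg (hτ0 x)]; exact hτ1 x)
  have hφ0' := hbd φ hφm hφ₀ hφ₁ f₀ hint₀
  have hφ1' := hbd φ hφm hφ₀ hφ₁ f₁ hint₁
  have hψ0' := hbd ψ hψm hψ₀ hψ₁ f₀ hint₀
  have hψ1' := hbd ψ hψm hψ₀ hψ₁ f₁ hint₁
  set g : X → ℝ := fun x => (φ x - ψ x) * (f₁ x - k * f₀ x) with hg
  have hgi : Integrable g ν := by
    have : g = fun x => (φ x * f₁ x - ψ x * f₁ x) -
        k • (fun x => φ x * f₀ x - ψ x * f₀ x) x := by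
      funext x; simp [hg]; ring
    rw [this]
    exact (hφ1'.sub hψ1').sub (((hφ0'.sub hψ0')).smul k)
  have hgnn : 0 ≤ᵐ[ν] g := by
    filter_upwards [hform] with x ⟨h1, h0⟩
    show (0:ℝ) ≤ (φ x - ψ x) * (f₁ x - k * f₀ x)
    rcases lt_trichotomy (f₁ x) (k * f₀ x) with h | h | h
    · have hz : φ x = 0 := h0 h
      nlinarith [hψ₀ x]
    · simp [h]
    · have hz : φ x = 1 := h1 h
      nlinarith [hψ₁ x]
  have hgint : ∫ x, g x ∂ν ≤ 0 := by
    have h1 : ∫ x, g x ∂ν = ∫ x, (φ x * f₁ x - ψ x * f₁ x)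
        + k * (ψ x * f₀ x - φ x * f₀ x) ∂ν := by
      congr 1; funext x; simp [hg]; ring
    have h2 : ∫ x, (φ x * f₁ x - ψ x * f₁ x) + k * (ψ x * f₀ x - φ x * f₀ x) ∂ν
        = (∫ x, φ x * f₁ x - ψ x * f₁ x ∂ν)
          + ∫ x, k * (ψ x * f₀ x - φ x * f₀ x) ∂ν :=
      integral_add (hφ1'.sub hψ1') ((hψ0'.sub hφ0').const_mul k)
    have h3 : ∫ x, φ x * f₁ x - ψ x * f₁ x ∂ν
        = (∫ x, φ x * f₁ x ∂ν) - ∫ x, ψ x * f₁ x ∂ν := integral_sub hφ1' hψ1'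
    have h4 : ∫ x, k * (ψ x * f₀ x - φ x * f₀ x) ∂ν
        = k * ∫ x, ψ x * f₀ x - φ x * f₀ x ∂ν := integral_const_mul k _
    have h5 : ∫ x, ψ x * f₀ x - φ x * f₀ x ∂ν
        = (∫ x, ψ x * f₀ x ∂ν) - ∫ x, φ x * f₀ x ∂ν := integral_sub hψ0' hφ0'
    rw [h1, h2, h3, h4, h5]
    nlinarith
  have hg0 : g =ᵐ[ν] 0 := by
    rw [← integral_eq_zero_iff_of_nonneg_ae hgnn hgi]
    have := integral_nonneg_of_ae hgnn
    linarith
  filter_upwards [hg0] with x hx hne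
  have : (φ x - ψ x) * (f₁ x - k * f₀ x) = 0 := hx
  rcases mul_eq_zero.1 this with h | h
  · linarith
  · exact absurd (by linarith : f₁ x = k * f₀ x) hne
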